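/- Let Z = (Z_1, ..., Z_m) be binary random variables (with arbitrary joint distribution) taking values in {0,1}, with m = n + k. Let Π be a uniformly random subset of [m] of size k, independent of Z, and let Π̄ be its complement. Then for any δ ∈ (0,1) and ν > 0, Pr[ (∑_{i∈Π} Z_i ≤ kδ) ∧ (∑_{i∈Π̄} Z_i ≥ n(δ+ν)) ] ≤ exp( -2ν² n k² / ((n+k)(k+1)) ). -/

import Mathlib

open BigOperators Finset

lemma bern_mgf (p t : ℝ) (hp0 : 0 ≤ p) (hp1 : p ≤ 1) (ht : 0 ≤ t) :
    (1 - p) * Real.exp (-(t * p)) + p * Real.exp (t * (1 - p)) ≤ Real.exp (t ^ 2 / 8) := by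
  set d : ℝ → ℝ := fun u => 1 - p + p * Real.exp u with hd_def
  have hd : ∀ u, 0 < d u := by
    intro u
    rcases eq_or_lt_of_le hp1 with h | h
    · have := Real.exp_pos u
      subst h
      simp only [hd_def]; linarith
    · have : 0 ≤ p * Real.exp u := mul_nonneg hp0 (Real.exp_pos u).le
      simp only [hd_def]; linarith
  -- derivative facts
  have hdd : ∀ u, HasDerivAt d (p * Real.exp u) u := by
    intro u
    exact ((Real.hasDerivAt_exp u).const_mul p).const_add (1 - p)
  -- f1 = derivative of g
  set f1 : ℝ → ℝ := fun u => p + u / 4 - p * Real.exp u / d u with hf1_def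
  have hf1d : ∀ u, HasDerivAt f1
      (1 / 4 - (p * Real.exp u * d u - p * Real.exp u * (p * Real.exp u)) / (d u) ^ 2) u := by
    intro u
    have h1 : HasDerivAt (fun u => p * Real.exp u) (p * Real.exp u) u :=
      (Real.hasDerivAt_exp u).const_mul p
    have h2 : HasDerivAt (fun u => p * Real.exp u / d u)
        ((p * Real.exp u * d u - p * Real.exp u * (p * Real.exp u)) / (d u) ^ 2) u :=
      h1.div (hdd u) (hd u).ne'
    have h3 : HasDerivAt (fun u => p + u / 4) (1 / 4) u := by
      simpa using ((hasDerivAt_id u).div_const 4).const_add p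
    exact h3.sub h2
  have hf1nonneg : ∀ u, 0 ≤ 1 / 4 - (p * Real.exp u * d u - p * Real.exp u * (p * Real.exp u)) / (d u) ^ 2 := by
    intro u
    have h4 : p * Real.exp u * d u - p * Real.exp u * (p * Real.exp u)
        = (p * Real.exp u) * (1 - p) := by simp only [hd_def]; ring
    rw [h4, sub_nonneg, div_le_iff₀ (pow_pos (hd u) 2)]
    have hAM : 0 ≤ (1 - p - p * Real.exp u) ^ 2 := sq_nonneg _
    simp only [hd_def]
    nlinarith [hAM]
  have hf1mono : Monotone f1 := by
    apply monotone_of_deriv_nonneg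
    · intro u; exact (hf1d u).differentiableAt
    · intro u; rw [(hf1d u).deriv]; exact hf1nonneg u
  have hf10 : f1 0 = 0 := by simp [hf1_def, hd_def]
  have hf1pos : ∀ u, 0 ≤ u → 0 ≤ f1 u := by
    intro u hu; rw [← hf10]; exact hf1mono hu
  -- g
  set g : ℝ → ℝ := fun u => p * u + u ^ 2 / 8 - Real.log (d u) with hg_def
  have hgd : ∀ u, HasDerivAt g (f1 u) u := by
    intro u
    have h1 : HasDerivAt (fun u => Real.log (d u)) (p * Real.exp u / d u) u :=
      (hdd u).log (hd u).ne'
    have h2 := (((hasDerivAt_id u).const_mul p).add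
      (((hasDerivAt_id u).pow 2).div_const 8)).sub h1
    refine h2.congr_deriv ?_
    show _ = p + u / 4 - p * Real.exp u / d u
    norm_num [id_eq]
    ring
  have hgmono : MonotoneOn g (Set.Ici (0:ℝ)) := by
    apply monotoneOn_of_deriv_nonneg (convex_Ici 0)
    · exact Continuous.continuousOn (by
        fun_prop (disch := exact fun u => (hd u).ne'))
    · intro u _; exact (hgd u).differentiableAt.differentiableWithinAt
    · intro u hu
      rw [(hgd u).deriv]
      exact hf1pos u (le_of_lt (by simpa using hu))
  have hg0 : g 0 = 0 := by simp [hg_def, hd_def]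
  have hgt : 0 ≤ g t := by
    rw [← hg0]; exact hgmono Set.self_mem_Ici ht ht
  -- conclude
  have hlog : Real.log (d t) ≤ p * t + t ^ 2 / 8 := by
    simp only [hg_def] at hgt; linarith
  have hdt : d t ≤ Real.exp (p * t + t ^ 2 / 8) := by
    rw [← Real.exp_log (hd t)]
    exact Real.exp_le_exp.2 hlog
  have key : (1 - p) * Real.exp (-(t * p)) + p * Real.exp (t * (1 - p))
      = Real.exp (-(t * p)) * d t := by
    simp only [hd_def]
    have e1 : Real.exp (t * (1 - p)) = Real.exp (-(t * p)) * Real.exp t := by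
      rw [← Real.exp_add]; ring_nf
    rw [e1]; ring
  rw [key]
  calc Real.exp (-(t * p)) * d t ≤ Real.exp (-(t * p)) * Real.exp (p * t + t ^ 2 / 8) :=
        mul_le_mul_of_nonneg_left hdt (Real.exp_pos _).le
    _ = Real.exp (t ^ 2 / 8) := by rw [← Real.exp_add]; ring_nf


lemma sumV (k : ℕ) (hk : 1 ≤ k) : ∀ n : ℕ,
    ∑ j ∈ Finset.range n, (((k : ℝ) + j)⁻¹) ^ 2 ≤ n * (k + 1) / ((n + k) * k ^ 2) := by
  intro n
  induction n with
  | zero => simp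
  | succ n ih =>
    rw [Finset.sum_range_succ]
    have hk' : (1:ℝ) ≤ k := by exact_mod_cast hk
    have hn' : (0:ℝ) ≤ n := Nat.cast_nonneg n
    have h1 : (0:ℝ) < (n + k) * k ^ 2 := by positivity
    have h2 : (0:ℝ) < ((k:ℝ) + n) ^ 2 := by positivity
    have h3 : (0:ℝ) < ((n:ℝ) + 1 + k) * k ^ 2 := by positivity
    have key : (n : ℝ) * (k + 1) / ((n + k) * k ^ 2) + (((k : ℝ) + n)⁻¹) ^ 2
        ≤ (n + 1) * (k + 1) / ((n + 1 + k) * k ^ 2) := by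
      rw [inv_pow, ← one_div, div_add_div _ _ (ne_of_gt h1) (ne_of_gt h2),
        div_le_div_iff₀ (by positivity) h3]
      have hid : ((n:ℝ) + 1) * (k + 1) * ((n + k) * k ^ 2 * ((k:ℝ) + n) ^ 2)
          - ((n:ℝ) * (k + 1) * ((k:ℝ) + n) ^ 2 + (n + k) * k ^ 2 * 1) * (((n:ℝ) + 1 + k) * k ^ 2)
          = (k:ℝ) ^ 3 * n * (n + k) := by ring
      nlinarith [mul_nonneg (mul_nonneg (pow_nonneg (by linarith : (0:ℝ) ≤ (k:ℝ)) 3) hn') (by linarith : (0:ℝ) ≤ (n:ℝ) + k)]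
    have := add_le_add_left ih ((((k : ℝ) + n)⁻¹) ^ 2)
    calc ∑ j ∈ Finset.range n, (((k : ℝ) + j)⁻¹) ^ 2 + (((k : ℝ) + n)⁻¹) ^ 2
        ≤ (n : ℝ) * (k + 1) / ((n + k) * k ^ 2) + (((k : ℝ) + n)⁻¹) ^ 2 := this
      _ ≤ ((n : ℝ) + 1) * (k + 1) / ((n + 1 + k) * k ^ 2) := key
      _ = (↑(n + 1)) * (k + 1) / ((↑(n + 1) + k) * k ^ 2) := by push_cast; ring

lemma insert_sum {m j : ℕ} (g : Finset (Fin m) → ℝ) :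
    ∑ D ∈ powersetCard j (univ : Finset (Fin m)), ∑ x ∈ Dᶜ, g (insert x D)
      = ((j:ℝ) + 1) * ∑ D ∈ powersetCard (j+1) (univ : Finset (Fin m)), g D := by
  have hrhs : ((j:ℝ) + 1) * ∑ D ∈ powersetCard (j+1) (univ : Finset (Fin m)), g D
      = ∑ D ∈ powersetCard (j+1) (univ : Finset (Fin m)), ∑ _x ∈ D, g D := by
    rw [Finset.mul_sum]
    refine Finset.sum_congr rfl fun D hD => ?_
    rw [Finset.sum_const, (Finset.mem_powersetCard.1 hD).2]
    push_cast
    ring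
  rw [hrhs, Finset.sum_sigma', Finset.sum_sigma']
  refine Finset.sum_nbij'
    (i := fun (p : (Σ _ : Finset (Fin m), Fin m)) => (⟨insert p.2 p.1, p.2⟩ : Σ _ : Finset (Fin m), Fin m))
    (j := fun (p : (Σ _ : Finset (Fin m), Fin m)) => (⟨p.1.erase p.2, p.2⟩ : Σ _ : Finset (Fin m), Fin m))
    ?_ ?_ ?_ ?_ (fun a _ => rfl)
  · rintro ⟨D, x⟩ hp
    rw [Finset.mem_sigma] at hp ⊢
    obtain ⟨hD, hx⟩ := hp
    rw [Finset.mem_powersetCard] at hD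
    have hxD : x ∉ D := by simpa using hx
    refine ⟨Finset.mem_powersetCard.2 ⟨Finset.subset_univ _, ?_⟩, Finset.mem_insert_self _ _⟩
    rw [Finset.card_insert_of_notMem hxD, hD.2]
  · rintro ⟨D, x⟩ hp
    rw [Finset.mem_sigma] at hp ⊢
    obtain ⟨hD, hx⟩ := hp
    rw [Finset.mem_powersetCard] at hD
    refine ⟨Finset.mem_powersetCard.2 ⟨Finset.subset_univ _, ?_⟩, ?_⟩
    · rw [Finset.card_erase_of_mem hx, hD.2]; rfl
    · simp
  · rintro ⟨D, x⟩ hp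
    rw [Finset.mem_sigma] at hp
    have hxD : x ∉ D := by simpa using hp.2
    simp [Finset.erase_insert_of_ne, hxD, Finset.erase_insert]
  · rintro ⟨D, x⟩ hp
    rw [Finset.mem_sigma] at hp
    simp [Finset.insert_erase hp.2]

lemma mgf_bound {m : ℕ} (c : Fin m → ℝ) (hc0 : ∀ i, 0 ≤ c i) (hc1 : ∀ i, c i ≤ 1)
    (hcb : ∀ i, c i = 0 ∨ c i = 1) (lam : ℝ) (hlam : 0 ≤ lam) :
    ∀ j : ℕ, j + 1 ≤ m →
    ∑ D ∈ powersetCard j (univ : Finset (Fin m)),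
        Real.exp (lam * ((∑ i ∈ D, c i) - (j : ℝ) * ((∑ i, c i) / m)) / ((m : ℝ) - j))
      ≤ (m.choose j : ℝ) *
          Real.exp (lam ^ 2 / 8 * ∑ i ∈ Finset.range j, (((m : ℝ) - 1 - i)⁻¹) ^ 2) := by
  intro j
  induction j with
  | zero => simp
  | succ j ih =>
    intro hj1
    have ihj := ih (by omega)
    set μ : ℝ := (∑ i, c i) / m with hμ
    have hmR : (j : ℝ) + 2 ≤ m := by exact_mod_cast (by omega : j + 2 ≤ m)
    have h1 : (0:ℝ) < (m : ℝ) - j := by linarith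
    have h2 : (0:ℝ) < (m : ℝ) - j - 1 := by linarith
    set t : ℝ := lam / ((m : ℝ) - j - 1) with ht
    have htpos : 0 ≤ t := div_nonneg hlam h2.le
    have hμm : (m : ℝ) * μ = ∑ i, c i := by
      rw [hμ, mul_div_cancel₀]
      exact Nat.cast_ne_zero.2 (by omega)
    -- rewrite the (j+1)-sum using insert_sum
    have hins := insert_sum (m := m) (j := j)
      (g := fun D => Real.exp (lam * ((∑ i ∈ D, c i) - ((j : ℝ) + 1) * μ) / ((m : ℝ) - j - 1)))
    have hTarget : ∑ D ∈ powersetCard (j+1) (univ : Finset (Fin m)),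
        Real.exp (lam * ((∑ i ∈ D, c i) - ((j+1 : ℕ) : ℝ) * μ) / ((m : ℝ) - ((j+1 : ℕ) : ℝ)))
        = ∑ D ∈ powersetCard (j+1) (univ : Finset (Fin m)),
        Real.exp (lam * ((∑ i ∈ D, c i) - ((j : ℝ) + 1) * μ) / ((m : ℝ) - j - 1)) := by
      refine Finset.sum_congr rfl fun D _ => ?_
      push_cast
      ring_nf
    -- bound the double sum
    have hdouble : ∑ D ∈ powersetCard j (univ : Finset (Fin m)), ∑ x ∈ Dᶜ,
        Real.exp (lam * ((∑ i ∈ insert x D, c i) - ((j : ℝ) + 1) * μ) / ((m : ℝ) - j - 1))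
        ≤ ∑ D ∈ powersetCard j (univ : Finset (Fin m)),
          Real.exp (lam * ((∑ i ∈ D, c i) - (j : ℝ) * μ) / ((m : ℝ) - j)) *
            (((m : ℝ) - j) * Real.exp (t ^ 2 / 8)) := by
      refine Finset.sum_le_sum fun D hD => ?_
      rw [Finset.mem_powersetCard] at hD
      have hcardD : D.card = j := hD.2
      have hcardDc : (Dᶜ : Finset (Fin m)).card = m - j := by
        rw [Finset.card_compl, hcardD, Fintype.card_fin]
      set S : ℝ := ∑ i ∈ D, c i with hS
      have hsum_compl : ∑ i ∈ Dᶜ, c i = (m : ℝ) * μ - S := by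
        have := Finset.sum_add_sum_compl D c
        rw [hμm]; linarith
      set e : ℝ := ((m : ℝ) * μ - S) / ((m : ℝ) - j) with he
      have he0 : 0 ≤ e := by
        rw [he]
        apply div_nonneg _ h1.le
        rw [← hsum_compl]
        exact Finset.sum_nonneg fun i _ => hc0 i
      have he1 : e ≤ 1 := by
        rw [he, div_le_one h1]
        rw [← hsum_compl]
        calc ∑ i ∈ Dᶜ, c i ≤ ∑ _i ∈ Dᶜ, (1:ℝ) := Finset.sum_le_sum fun i _ => hc1 i
          _ = ((m : ℝ) - j) := by
              rw [Finset.sum_const, hcardDc]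
              simp only [nsmul_eq_mul, smul_eq_mul, mul_one]
              push_cast [Nat.cast_sub (by omega : j ≤ m)]
              ring
      have hemul : e * ((m : ℝ) - j) = (m : ℝ) * μ - S := by
        rw [he, div_mul_cancel₀ _ h1.ne']
      -- pointwise splitting
      have hpt : ∀ x ∈ Dᶜ,
          Real.exp (lam * ((∑ i ∈ insert x D, c i) - ((j : ℝ) + 1) * μ) / ((m : ℝ) - j - 1))
          = Real.exp (lam * (S - (j : ℝ) * μ) / ((m : ℝ) - j)) *
            (c x * Real.exp (t * (1 - e)) + (1 - c x) * Real.exp (-(t * e))) := by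
        intro x hx
        have hxD : x ∉ D := by simpa using hx
        rw [Finset.sum_insert hxD]
        have hexp : lam * ((c x + S) - ((j : ℝ) + 1) * μ) / ((m : ℝ) - j - 1)
            = lam * (S - (j : ℝ) * μ) / ((m : ℝ) - j) + t * (c x - e) := by
          rw [ht, he]
          field_simp
          ring
        rw [hexp, Real.exp_add]
        congr 1
        rcases hcb x with h | h
        · rw [h]; ring_nf
        · rw [h]; ring_nf
      rw [Finset.sum_congr rfl hpt, ← Finset.mul_sum]
      refine mul_le_mul_of_nonneg_left ?_ (Real.exp_pos _).le
      have hsplit : ∑ x ∈ Dᶜ, (c x * Real.exp (t * (1 - e)) + (1 - c x) * Real.exp (-(t * e)))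
          = ((m : ℝ) * μ - S) * Real.exp (t * (1 - e)) +
            (((m : ℝ) - j) - ((m : ℝ) * μ - S)) * Real.exp (-(t * e)) := by
        rw [Finset.sum_add_distrib, ← Finset.sum_mul, ← Finset.sum_mul, hsum_compl]
        congr 2
        rw [Finset.sum_sub_distrib, hsum_compl, Finset.sum_const, hcardDc]
        simp only [nsmul_eq_mul, smul_eq_mul, mul_one]
        push_cast [Nat.cast_sub (by omega : j ≤ m)]
        ring
      rw [hsplit]
      calc ((m : ℝ) * μ - S) * Real.exp (t * (1 - e)) +
            (((m : ℝ) - j) - ((m : ℝ) * μ - S)) * Real.exp (-(t * e))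
          = ((m : ℝ) - j) * ((1 - e) * Real.exp (-(t * e)) + e * Real.exp (t * (1 - e))) := by
            rw [← hemul]; ring
        _ ≤ ((m : ℝ) - j) * Real.exp (t ^ 2 / 8) :=
            mul_le_mul_of_nonneg_left (bern_mgf e t he0 he1 htpos) h1.le
    -- assemble
    have hcho : ((m : ℝ) - j) * (m.choose j : ℝ) = ((j : ℝ) + 1) * (m.choose (j+1) : ℝ) := by
      have h := Nat.choose_succ_right_eq m j
      have h' : ((m.choose (j+1) * (j+1) : ℕ) : ℝ) = ((m.choose j * (m - j) : ℕ) : ℝ) := by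
        exact_mod_cast congrArg (Nat.cast : ℕ → ℝ) h
      push_cast [Nat.cast_sub (by omega : j ≤ m)] at h'
      linarith
    have htsq : t ^ 2 / 8 = lam ^ 2 / 8 * (((m : ℝ) - 1 - (j : ℝ))⁻¹) ^ 2 := by
      rw [ht, div_pow, inv_pow, show ((m : ℝ) - 1 - (j : ℝ)) = (m : ℝ) - (j : ℝ) - 1 from by ring]
      ring
    have hexp2 : Real.exp (t ^ 2 / 8) * Real.exp (lam ^ 2 / 8 * ∑ i ∈ Finset.range j, (((m : ℝ) - 1 - i)⁻¹) ^ 2)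
        = Real.exp (lam ^ 2 / 8 * ∑ i ∈ Finset.range (j+1), (((m : ℝ) - 1 - i)⁻¹) ^ 2) := by
      rw [← Real.exp_add, Finset.sum_range_succ, htsq]
      congr 1
      ring
    have hchain : ((j : ℝ) + 1) * ∑ D ∈ powersetCard (j+1) (univ : Finset (Fin m)),
        Real.exp (lam * ((∑ i ∈ D, c i) - ((j : ℝ) + 1) * μ) / ((m : ℝ) - j - 1))
        ≤ ((j : ℝ) + 1) * ((m.choose (j+1) : ℝ) *
            Real.exp (lam ^ 2 / 8 * ∑ i ∈ Finset.range (j+1), (((m : ℝ) - 1 - i)⁻¹) ^ 2)) := by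
      calc ((j : ℝ) + 1) * ∑ D ∈ powersetCard (j+1) (univ : Finset (Fin m)),
            Real.exp (lam * ((∑ i ∈ D, c i) - ((j : ℝ) + 1) * μ) / ((m : ℝ) - j - 1))
          = ∑ D ∈ powersetCard j (univ : Finset (Fin m)), ∑ x ∈ Dᶜ,
              Real.exp (lam * ((∑ i ∈ insert x D, c i) - ((j : ℝ) + 1) * μ) / ((m : ℝ) - j - 1)) :=
            hins.symm
        _ ≤ ∑ D ∈ powersetCard j (univ : Finset (Fin m)),
              Real.exp (lam * ((∑ i ∈ D, c i) - (j : ℝ) * μ) / ((m : ℝ) - j)) *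
                (((m : ℝ) - j) * Real.exp (t ^ 2 / 8)) := hdouble
        _ = (((m : ℝ) - j) * Real.exp (t ^ 2 / 8)) *
              ∑ D ∈ powersetCard j (univ : Finset (Fin m)),
                Real.exp (lam * ((∑ i ∈ D, c i) - (j : ℝ) * μ) / ((m : ℝ) - j)) := by
            rw [← Finset.sum_mul, mul_comm]
        _ ≤ (((m : ℝ) - j) * Real.exp (t ^ 2 / 8)) *
              ((m.choose j : ℝ) * Real.exp (lam ^ 2 / 8 * ∑ i ∈ Finset.range j, (((m : ℝ) - 1 - i)⁻¹) ^ 2)) := by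
            refine mul_le_mul_of_nonneg_left ihj (by positivity)
        _ = ((j : ℝ) + 1) * ((m.choose (j+1) : ℝ) *
              Real.exp (lam ^ 2 / 8 * ∑ i ∈ Finset.range (j+1), (((m : ℝ) - 1 - i)⁻¹) ^ 2)) := by
            rw [← hexp2]
            linear_combination Real.exp (t ^ 2 / 8) *
              Real.exp (lam ^ 2 / 8 * ∑ i ∈ Finset.range j, (((m : ℝ) - 1 - i)⁻¹) ^ 2) * hcho
    rw [hTarget]
    exact le_of_mul_le_mul_left hchain (by positivity)

lemma chernoff_count {m n k : ℕ} (hm : m = n + k) (hn : 1 ≤ n) (hk : 1 ≤ k)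
    (c : Fin m → ℝ) (hc0 : ∀ i, 0 ≤ c i) (hc1 : ∀ i, c i ≤ 1)
    (hcb : ∀ i, c i = 0 ∨ c i = 1) (a : ℝ) (ha : 0 < a) :
    ∑ A ∈ powersetCard n (univ : Finset (Fin m)),
      (if a ≤ ((∑ i ∈ A, c i) - (n : ℝ) * ((∑ i, c i) / m)) / ((m : ℝ) - n) then (1:ℝ) else 0)
    ≤ (m.choose n : ℝ) *
        Real.exp (-2 * a ^ 2 / (∑ i ∈ Finset.range n, (((m : ℝ) - 1 - i)⁻¹) ^ 2)) := by
  set V : ℝ := ∑ i ∈ Finset.range n, (((m : ℝ) - 1 - i)⁻¹) ^ 2 with hV_def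
  have hV : 0 < V := by
    rw [hV_def]
    apply Finset.sum_pos _ (Finset.nonempty_range_iff.2 (by omega))
    intro i hi
    have hi' : (i : ℝ) ≤ (n : ℝ) - 1 := by
      have : i + 1 ≤ n := Finset.mem_range.1 hi
      have := (Nat.cast_le (α := ℝ)).2 this
      push_cast at this; linarith
    have hmn : (n : ℝ) + (k : ℝ) = m := by exact_mod_cast congrArg (Nat.cast : ℕ → ℝ) hm.symm
    have hk' : (1:ℝ) ≤ k := by exact_mod_cast hk
    have : (0:ℝ) < (m : ℝ) - 1 - i := by linarith
    positivity
  set lam : ℝ := 4 * a / V with hlam_def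
  have hlam : 0 ≤ lam := by positivity
  set μ : ℝ := (∑ i, c i) / m with hμ
  calc ∑ A ∈ powersetCard n (univ : Finset (Fin m)),
        (if a ≤ ((∑ i ∈ A, c i) - (n : ℝ) * μ) / ((m : ℝ) - n) then (1:ℝ) else 0)
      ≤ ∑ A ∈ powersetCard n (univ : Finset (Fin m)),
        Real.exp (lam * ((∑ i ∈ A, c i) - (n : ℝ) * μ) / ((m : ℝ) - n) - lam * a) := by
        refine Finset.sum_le_sum fun A _ => ?_
        split_ifs with h
        · have h0 : 0 ≤ lam * ((∑ i ∈ A, c i) - (n : ℝ) * μ) / ((m : ℝ) - n) - lam * a := by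
            have := mul_le_mul_of_nonneg_left h hlam
            rw [mul_div_assoc]
            linarith
          have := Real.add_one_le_exp (lam * ((∑ i ∈ A, c i) - (n : ℝ) * μ) / ((m : ℝ) - n) - lam * a)
          linarith
        · exact (Real.exp_pos _).le
    _ = Real.exp (-(lam * a)) * ∑ A ∈ powersetCard n (univ : Finset (Fin m)),
        Real.exp (lam * ((∑ i ∈ A, c i) - (n : ℝ) * μ) / ((m : ℝ) - n)) := by
        rw [Finset.mul_sum]
        refine Finset.sum_congr rfl fun A _ => ?_
        rw [← Real.exp_add]
        congr 1
        ring
    _ ≤ Real.exp (-(lam * a)) * ((m.choose n : ℝ) * Real.exp (lam ^ 2 / 8 * V)) := by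
        refine mul_le_mul_of_nonneg_left ?_ (Real.exp_pos _).le
        exact mgf_bound c hc0 hc1 hcb lam hlam n (by omega)
    _ = (m.choose n : ℝ) * Real.exp (-2 * a ^ 2 / V) := by
        rw [← mul_assoc, mul_comm (Real.exp _) ((m.choose n : ℝ)), mul_assoc, ← Real.exp_add]
        congr 2
        rw [hlam_def]
        field_simp
        ring

lemma key_z {m n k : ℕ} (hm : m = n + k) (hn : 1 ≤ n) (hk : 1 ≤ k) (δ ν : ℝ) (hν : 0 < ν)
    (c : Fin m → ℝ) (hc0 : ∀ i, 0 ≤ c i) (hc1 : ∀ i, c i ≤ 1) (hcb : ∀ i, c i = 0 ∨ c i = 1) :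
    ∑ π ∈ powersetCard k (univ : Finset (Fin m)),
      (if (∑ i ∈ π, c i) ≤ (k : ℝ) * δ ∧ (n : ℝ) * (δ + ν) ≤ ∑ i ∈ πᶜ, c i then (1:ℝ) else 0)
    ≤ (m.choose k : ℝ) * Real.exp (-(2 * ν ^ 2 * n * k ^ 2) / ((n + k) * (k + 1))) := by
  have hm' : (m : ℝ) = (n : ℝ) + k := by exact_mod_cast congrArg (Nat.cast : ℕ → ℝ) hm
  have hk' : (1:ℝ) ≤ k := by exact_mod_cast hk
  have hn' : (1:ℝ) ≤ n := by exact_mod_cast hn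
  have hm0 : (0:ℝ) < m := by linarith
  set μ : ℝ := (∑ i, c i) / m with hμ
  set a : ℝ := (n : ℝ) * ν / m with ha_def
  have ha : 0 < a := by rw [ha_def]; positivity
  have hbij : ∑ π ∈ powersetCard k (univ : Finset (Fin m)),
      (if (∑ i ∈ π, c i) ≤ (k : ℝ) * δ ∧ (n : ℝ) * (δ + ν) ≤ ∑ i ∈ πᶜ, c i then (1:ℝ) else 0)
      = ∑ A ∈ powersetCard n (univ : Finset (Fin m)),
      (if (∑ i ∈ Aᶜ, c i) ≤ (k : ℝ) * δ ∧ (n : ℝ) * (δ + ν) ≤ ∑ i ∈ A, c i then (1:ℝ) else 0) := by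
    refine Finset.sum_nbij' (i := fun π : Finset (Fin m) => πᶜ)
      (j := fun A : Finset (Fin m) => Aᶜ) ?_ ?_ ?_ ?_ ?_
    · intro π hπ
      rw [Finset.mem_powersetCard] at hπ ⊢
      refine ⟨Finset.subset_univ _, ?_⟩
      rw [Finset.card_compl, hπ.2, Fintype.card_fin]; omega
    · intro A hA
      rw [Finset.mem_powersetCard] at hA ⊢
      refine ⟨Finset.subset_univ _, ?_⟩
      rw [Finset.card_compl, hA.2, Fintype.card_fin]; omega
    · intro π _; simp
    · intro A _; simp
    · intro π _; rw [compl_compl]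
  rw [hbij]
  have hstep2 : ∑ A ∈ powersetCard n (univ : Finset (Fin m)),
      (if (∑ i ∈ Aᶜ, c i) ≤ (k : ℝ) * δ ∧ (n : ℝ) * (δ + ν) ≤ ∑ i ∈ A, c i then (1:ℝ) else 0)
      ≤ ∑ A ∈ powersetCard n (univ : Finset (Fin m)),
      (if a ≤ ((∑ i ∈ A, c i) - (n : ℝ) * μ) / ((m : ℝ) - n) then (1:ℝ) else 0) := by
    refine Finset.sum_le_sum fun A hA => ?_
    split_ifs with h1 h2
    · exact le_refl _
    · exfalso
      apply h2
      obtain ⟨hA1, hA2⟩ := h1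
      have hsum : (∑ i ∈ A, c i) + ∑ i ∈ Aᶜ, c i = ∑ i, c i := Finset.sum_add_sum_compl A c
      have hμm : (m : ℝ) * μ = ∑ i, c i := by
        rw [hμ, mul_div_cancel₀ _ (by positivity : (m:ℝ) ≠ 0)]
      have hmn : (m : ℝ) - n = k := by linarith
      rw [hmn, ha_def, div_le_div_iff₀ hm0 (by linarith : (0:ℝ) < (k:ℝ))]
      have hexp : ((∑ i ∈ A, c i) - (n:ℝ) * μ) * m
          = (k:ℝ) * (∑ i ∈ A, c i) - (n:ℝ) * (∑ i ∈ Aᶜ, c i) := by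
        linear_combination (∑ i ∈ A, c i) * hm' - (n:ℝ) * hμm + (n:ℝ) * hsum
      rw [hexp]
      nlinarith [mul_le_mul_of_nonneg_left hA1 (by linarith : (0:ℝ) ≤ (n:ℝ)),
        mul_le_mul_of_nonneg_left hA2 (by linarith : (0:ℝ) ≤ (k:ℝ))]
    · norm_num
    · norm_num
  refine le_trans (le_trans hstep2 (chernoff_count hm hn hk c hc0 hc1 hcb a ha)) ?_
  have hchoose : (m.choose n : ℝ) = (m.choose k : ℝ) := by
    have : m - k = n := by omega
    rw [← this, Nat.choose_symm (by omega : k ≤ m)]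
  rw [hchoose]
  refine mul_le_mul_of_nonneg_left ?_ (Nat.cast_nonneg _)
  rw [Real.exp_le_exp]
  -- compare exponents
  set V : ℝ := ∑ i ∈ Finset.range n, (((m : ℝ) - 1 - i)⁻¹) ^ 2 with hV_def
  have hVpos : 0 < V := by
    rw [hV_def]
    apply Finset.sum_pos _ (Finset.nonempty_range_iff.2 (by omega))
    intro i hi
    have hi' : (i : ℝ) ≤ (n : ℝ) - 1 := by
      have : i + 1 ≤ n := Finset.mem_range.1 hi
      have := (Nat.cast_le (α := ℝ)).2 this
      push_cast at this; linarith
    have : (0:ℝ) < (m : ℝ) - 1 - i := by linarith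
    positivity
  have hreindex : V = ∑ j ∈ Finset.range n, (((k : ℝ) + j)⁻¹) ^ 2 := by
    rw [hV_def, ← Finset.sum_range_reflect]
    refine Finset.sum_congr rfl fun j hj => ?_
    have hj' : j + 1 ≤ n := Finset.mem_range.1 hj
    have hcast : ((n - 1 - j : ℕ) : ℝ) = (n : ℝ) - 1 - j := by
      have h1 : n - 1 - j = n - (1 + j) := by omega
      rw [h1, Nat.cast_sub (by omega)]
      push_cast; ring
    rw [hcast]
    congr 2
    linarith
  have hVB : V ≤ (n : ℝ) * (k + 1) / (((n : ℝ) + k) * k ^ 2) := by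
    rw [hreindex]; exact sumV k hk n
  have hB : 0 < (n : ℝ) * (k + 1) / (((n : ℝ) + k) * k ^ 2) := by positivity
  have h2a : -2 * a ^ 2 / V ≤ -(2 * a ^ 2 / ((n : ℝ) * (k + 1) / (((n : ℝ) + k) * k ^ 2))) := by
    rw [neg_mul, neg_div, neg_le_neg_iff]
    exact div_le_div_of_nonneg_left (by positivity) hVpos hVB
  have heq : 2 * a ^ 2 / ((n : ℝ) * (k + 1) / (((n : ℝ) + k) * k ^ 2))
      = 2 * ν ^ 2 * n * k ^ 2 / (((n : ℝ) + k) * (k + 1)) := by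
    rw [ha_def, hm']
    field_simp
  refine le_trans h2a ?_
  rw [neg_div, neg_le_neg_iff]
  exact le_of_eq heq.symm

/-- Serfling-type tail bound for parameter estimation.
`Z = (Z_1, ..., Z_m)` are binary random variables with arbitrary joint distribution `q`;
`Π` is a uniformly random size-`k` subset of `[m]` (weight `1 / (m choose k)`),
independent of `Z`; `Π̄ = Πᶜ` has size `n = m - k`. -/
theorem stmt0 (m n k : ℕ) (hm : m = n + k) (δ ν : ℝ) (hδ0 : 0 < δ) (hδ1 : δ < 1)
    (hν : 0 < ν)
    (q : (Fin m → Bool) → ℝ) (hq0 : ∀ z, 0 ≤ q z) (hq1 : ∑ z, q z = 1) :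
    ∑ z : Fin m → Bool, ∑ π ∈ Finset.powersetCard k (Finset.univ : Finset (Fin m)),
      q z * ((m.choose k : ℝ))⁻¹ *
        (if (∑ i ∈ π, (if z i then (1 : ℝ) else 0)) ≤ k * δ ∧
            (n : ℝ) * (δ + ν) ≤ ∑ i ∈ πᶜ, (if z i then (1 : ℝ) else 0) then 1 else 0)
      ≤ Real.exp (-(2 * ν ^ 2 * n * k ^ 2) / ((n + k) * (k + 1))) := by
  classical
  have hCpos : 0 < (m.choose k : ℝ) := by
    exact_mod_cast Nat.choose_pos (by omega : k ≤ m)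
  have key : ∀ z : Fin m → Bool,
      ∑ π ∈ Finset.powersetCard k (Finset.univ : Finset (Fin m)),
        (if (∑ i ∈ π, (if z i then (1 : ℝ) else 0)) ≤ k * δ ∧
            (n : ℝ) * (δ + ν) ≤ ∑ i ∈ πᶜ, (if z i then (1 : ℝ) else 0) then (1:ℝ) else 0)
      ≤ (m.choose k : ℝ) * Real.exp (-(2 * ν ^ 2 * n * k ^ 2) / ((n + k) * (k + 1))) := by
    intro z
    by_cases hdeg : n = 0 ∨ k = 0
    · have hR1 : Real.exp (-(2 * ν ^ 2 * (n:ℝ) * (k:ℝ) ^ 2) / (((n:ℝ) + k) * ((k:ℝ) + 1))) = 1 := by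
        rcases hdeg with h | h <;> subst h <;> norm_num
      rw [hR1, mul_one]
      calc ∑ π ∈ Finset.powersetCard k (Finset.univ : Finset (Fin m)),
            (if (∑ i ∈ π, (if z i then (1 : ℝ) else 0)) ≤ k * δ ∧
                (n : ℝ) * (δ + ν) ≤ ∑ i ∈ πᶜ, (if z i then (1 : ℝ) else 0) then (1:ℝ) else 0)
          ≤ ∑ _π ∈ Finset.powersetCard k (Finset.univ : Finset (Fin m)), (1:ℝ) :=
            Finset.sum_le_sum fun π _ => by split_ifs <;> norm_num
        _ = (m.choose k : ℝ) := by
            rw [Finset.sum_const, Finset.card_powersetCard, Finset.card_univ, Fintype.card_fin]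
            simp
    · push_neg at hdeg
      exact key_z hm (by omega) (by omega) δ ν hν (fun i => if z i then 1 else 0)
        (fun i => by split_ifs <;> norm_num)
        (fun i => by split_ifs <;> norm_num)
        (fun i => by split_ifs <;> simp)
  calc ∑ z : Fin m → Bool, ∑ π ∈ Finset.powersetCard k (Finset.univ : Finset (Fin m)),
        q z * ((m.choose k : ℝ))⁻¹ *
          (if (∑ i ∈ π, (if z i then (1 : ℝ) else 0)) ≤ k * δ ∧
              (n : ℝ) * (δ + ν) ≤ ∑ i ∈ πᶜ, (if z i then (1 : ℝ) else 0) then 1 else 0)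
      = ∑ z : Fin m → Bool, q z * (((m.choose k : ℝ))⁻¹ *
          ∑ π ∈ Finset.powersetCard k (Finset.univ : Finset (Fin m)),
            (if (∑ i ∈ π, (if z i then (1 : ℝ) else 0)) ≤ k * δ ∧
                (n : ℝ) * (δ + ν) ≤ ∑ i ∈ πᶜ, (if z i then (1 : ℝ) else 0) then (1:ℝ) else 0)) := by
        refine Finset.sum_congr rfl fun z _ => ?_
        rw [Finset.mul_sum, Finset.mul_sum]
        exact Finset.sum_congr rfl fun π _ => by ring
    _ ≤ ∑ z : Fin m → Bool, q z * Real.exp (-(2 * ν ^ 2 * n * k ^ 2) / ((n + k) * (k + 1))) := by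
        refine Finset.sum_le_sum fun z _ => ?_
        refine mul_le_mul_of_nonneg_left ?_ (hq0 z)
        have h2 := mul_le_mul_of_nonneg_left (key z) (inv_nonneg.2 hCpos.le)
        rwa [← mul_assoc, inv_mul_cancel₀ hCpos.ne', one_mul] at h2
    _ = Real.exp (-(2 * ν ^ 2 * n * k ^ 2) / ((n + k) * (k + 1))) := by
        rw [← Finset.sum_mul, hq1, one_mul]
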